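/- Let A be an m×n real matrix with rank ρ and k ≤ ρ. Let Q ∈ R^{m×k} have orthonormal columns, each of which lies in the column space of A. Then ‖U_k U_kᵀ − Q Qᵀ‖_2 = ‖U_{ρ−k}ᵀ Q‖_2. -/

import Mathlib

open Matrix MeasureTheory ProbabilityTheory
open scoped Matrix.Norms.L2Operator

noncomputable section

/-- Euclidean (ℓ²) norm of a vector. -/
def vnorm {m : ℕ} (x : Fin m → ℝ) : ℝ := ‖(WithLp.equiv 2 (Fin m → ℝ)).symm x‖

/-- Restored helper (removed from Mathlib): `Mᵀ * M` is Hermitian for real `M`. -/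
theorem Matrix.isHermitian_transpose_mul_self {m n : ℕ} (M : Matrix (Fin m) (Fin n) ℝ) :
    (Mᵀ * M).IsHermitian := by
  have h := Matrix.isHermitian_conjTranspose_mul_self M
  rwa [Matrix.conjTranspose_eq_transpose_of_trivial] at h

/-- `sval M i` is the `i`-th largest singular value of `M` (0-indexed), i.e. the square root of
the `i`-th largest eigenvalue of `MᵀM`. -/
def sval {m n : ℕ} (M : Matrix (Fin m) (Fin n) ℝ) (i : Fin n) : ℝ :=
  Real.sqrt ((Matrix.isHermitian_transpose_mul_self M).eigenvalues
    (Tuple.sort (Matrix.isHermitian_transpose_mul_self M).eigenvalues i.rev))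

/-- `P` is the Moore–Penrose pseudoinverse of `M` (the four Penrose conditions). -/
def IsMoorePenrose {m n : ℕ} (M : Matrix (Fin m) (Fin n) ℝ)
    (P : Matrix (Fin n) (Fin m) ℝ) : Prop :=
  M * P * M = M ∧ P * M * P = P ∧ (M * P)ᵀ = M * P ∧ (P * M)ᵀ = P * M

/-- Column space of a matrix: the span of its columns. -/
def colSpace {m n : ℕ} (M : Matrix (Fin m) (Fin n) ℝ) : Submodule ℝ (Fin m → ℝ) :=
  Submodule.span ℝ (Set.range Mᵀ)

namespace Stmt7Aux

/-! ### Euclidean norm of vectors -/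

def en {p : ℕ} (x : Fin p → ℝ) : ℝ := ‖(WithLp.equiv 2 (Fin p → ℝ)).symm x‖

lemma en_nonneg {p : ℕ} (x : Fin p → ℝ) : 0 ≤ en x := norm_nonneg _

lemma en_sq {p : ℕ} (x : Fin p → ℝ) : en x ^ 2 = x ⬝ᵥ x := by
  rw [en, EuclideanSpace.norm_eq]
  rw [Real.sq_sqrt (by positivity)]
  simp [dotProduct, Real.norm_eq_abs, sq_abs, sq]

lemma en_eq_zero {p : ℕ} {x : Fin p → ℝ} (h : en x = 0) : x = 0 := by
  have := norm_eq_zero.mp h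
  simpa [WithLp.equiv] using this

lemma en_mulVec_le {p q : ℕ} (A : Matrix (Fin p) (Fin q) ℝ) (x : Fin q → ℝ) :
    en (A *ᵥ x) ≤ ‖A‖ * en x :=
  A.l2_opNorm_mulVec ((WithLp.equiv 2 (Fin q → ℝ)).symm x)

lemma mat_norm_le {p q : ℕ} (A : Matrix (Fin p) (Fin q) ℝ) {c : ℝ} (hc : 0 ≤ c)
    (h : ∀ x : Fin q → ℝ, en (A *ᵥ x) ≤ c * en x) : ‖A‖ ≤ c := by
  rw [Matrix.l2_opNorm_def]
  apply ContinuousLinearMap.opNorm_le_bound _ hc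
  intro x
  simpa [Matrix.toEuclideanLin_apply, en] using h x

lemma dp_shift {p q : ℕ} (A : Matrix (Fin p) (Fin q) ℝ) (u : Fin q → ℝ) (w : Fin p → ℝ) :
    (A *ᵥ u) ⬝ᵥ w = u ⬝ᵥ (Aᵀ *ᵥ w) := by
  rw [dotProduct_comm, Matrix.dotProduct_mulVec, Matrix.mulVec_transpose, dotProduct_comm]

/-! ### Operator norm facts -/

lemma sq_eq_of_nonneg {a b : ℝ} (ha : 0 ≤ a) (hb : 0 ≤ b) (h : a ^ 2 = b ^ 2) : a = b := by
  nlinarith [sq_nonneg (a - b), sq_nonneg (a + b)]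

lemma mul_sq_bound {a b c : ℝ} (ha : 0 ≤ a) (h : a ≤ b * c) : a ^ 2 ≤ b ^ 2 * c ^ 2 := by
  have h1 : 0 ≤ b * c - a := by linarith
  have h2 : 0 ≤ b * c + a := by linarith
  nlinarith [mul_nonneg h1 h2]

lemma big_bound {p q y : ℝ} (hy : 1 ≤ y) (hp : 0 ≤ p) (hq : 0 ≤ q) :
    p ^ 2 - q ^ 2 ≤ y ^ 2 * p ^ 2 := by
  have hy2 : 1 ≤ y ^ 2 := by nlinarith
  have h3 := mul_nonneg (sub_nonneg.mpr hy2) (sq_nonneg p)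
  nlinarith [sq_nonneg q]

lemma one_sub_sq_nonneg {y : ℝ} (hy : 0 ≤ y) (hy1 : y < 1) : 0 ≤ 1 - y ^ 2 := by nlinarith

lemma slow_bound {x u w y c : ℝ} (hx : 0 ≤ x) (hu : 0 ≤ u) (hw : 0 ≤ w) (hy : 0 ≤ y)
    (hc : 0 ≤ c) (hsq : x ^ 2 = u ^ 2 - w ^ 2) (hwy : w ≤ y * u) (hc2 : c ^ 2 = 1 - y ^ 2) :
    c * u ≤ x := by
  nlinarith [mul_nonneg hc hu, mul_nonneg hy hu, sq_nonneg (x - c * u), sq_nonneg (x + c * u)]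

lemma trans_bound {p q y c : ℝ} (hp : 0 ≤ p) (hq : 0 ≤ q) (hc : 0 ≤ c) (hy : 0 ≤ y)
    (h : c * p ≤ q) (hc2 : c ^ 2 = 1 - y ^ 2) : p ^ 2 - q ^ 2 ≤ y ^ 2 * p ^ 2 := by
  nlinarith [mul_nonneg hc hp]

lemma root_le {a y c : ℝ} (ha : 0 ≤ a) (hy : 0 ≤ y) (hc : 0 ≤ c)
    (h : a ^ 2 ≤ y ^ 2 * c ^ 2) : a ≤ y * c := by
  nlinarith [mul_nonneg hy hc, sq_nonneg (a - y * c), sq_nonneg (a + y * c)]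

lemma norm_tmul {p q : ℕ} (A : Matrix (Fin p) (Fin q) ℝ) : ‖Aᵀ * A‖ = ‖A‖ ^ 2 := by
  rw [← Matrix.conjTranspose_eq_transpose_of_trivial, Matrix.l2_opNorm_conjTranspose_mul_self, sq]

lemma en_norm_transpose {p q : ℕ} (A : Matrix (Fin p) (Fin q) ℝ) : ‖Aᵀ‖ = ‖A‖ := by
  rw [← Matrix.conjTranspose_eq_transpose_of_trivial, Matrix.l2_opNorm_conjTranspose]

lemma norm_mul_left_iso {p q r : ℕ} (U : Matrix (Fin p) (Fin q) ℝ) (hU : Uᵀ * U = 1)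
    (B : Matrix (Fin q) (Fin r) ℝ) : ‖U * B‖ = ‖B‖ := by
  apply sq_eq_of_nonneg (norm_nonneg _) (norm_nonneg _)
  rw [← norm_tmul, ← norm_tmul B, Matrix.transpose_mul, Matrix.mul_assoc,
    ← Matrix.mul_assoc Uᵀ, hU, Matrix.one_mul]

lemma norm_mul_right_iso {p q r : ℕ} (B : Matrix (Fin r) (Fin q) ℝ)
    (U : Matrix (Fin p) (Fin q) ℝ) (hU : Uᵀ * U = 1) : ‖B * Uᵀ‖ = ‖B‖ := by
  have : B * Uᵀ = (U * Bᵀ)ᵀ := by rw [Matrix.transpose_mul, Matrix.transpose_transpose]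
  rw [this, en_norm_transpose, norm_mul_left_iso U hU, en_norm_transpose]

lemma norm_sel_le {p q : ℕ} (E : Matrix (Fin p) (Fin q) ℝ) (hE : Eᵀ * E = 1) : ‖E‖ ≤ 1 := by
  have h1 : ‖(1 : Matrix (Fin q) (Fin q) ℝ)‖ ^ 2 = ‖(1 : Matrix (Fin q) (Fin q) ℝ)‖ := by
    rw [← norm_tmul, Matrix.transpose_one, Matrix.one_mul]
  have h2 : ‖(1 : Matrix (Fin q) (Fin q) ℝ)‖ ≤ 1 := by
    nlinarith [norm_nonneg (1 : Matrix (Fin q) (Fin q) ℝ)]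
  have h3 : ‖E‖ ^ 2 = ‖(1 : Matrix (Fin q) (Fin q) ℝ)‖ := by rw [← norm_tmul, hE]
  nlinarith [norm_nonneg E]

/-- the minimal singular value of a *square* matrix bounds its transpose too -/
lemma smin_transpose {p : ℕ} (X : Matrix (Fin p) (Fin p) ℝ) {c : ℝ} (hc : 0 ≤ c)
    (h : ∀ v, c * en v ≤ en (X *ᵥ v)) : ∀ v, c * en v ≤ en (Xᵀ *ᵥ v) := by
  rcases eq_or_lt_of_le hc with hc0 | hcpos
  · intro v
    rw [← hc0, zero_mul]
    exact en_nonneg _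
  intro v
  have hinj : Function.Injective (X.mulVec) := by
    intro a b hab
    have h2 : X *ᵥ (a - b) = 0 := by rw [Matrix.mulVec_sub, hab, sub_self]
    have h3 := h (a - b)
    rw [h2] at h3
    have h4 : en (0 : Fin p → ℝ) = 0 := by simp [en]
    rw [h4] at h3
    have h5 : en (a - b) = 0 :=
      le_antisymm (by nlinarith [en_nonneg (a-b)]) (en_nonneg _)
    exact sub_eq_zero.mp (en_eq_zero h5)
  have hunit : IsUnit X := Matrix.mulVec_injective_iff_isUnit.mp hinj
  have hdet : IsUnit X.det := X.isUnit_iff_isUnit_det.mp hunit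
  have hXinv : X * X⁻¹ = 1 := X.mul_nonsing_inv hdet
  have hninv : ‖X⁻¹‖ ≤ 1 / c := by
    apply mat_norm_le _ (by positivity)
    intro u
    have h6 := h (X⁻¹ *ᵥ u)
    rw [Matrix.mulVec_mulVec, hXinv, Matrix.one_mulVec] at h6
    rw [div_mul_eq_mul_div, le_div_iff₀ hcpos, mul_comm]
    linarith
  have hv : v = (X⁻¹)ᵀ *ᵥ (Xᵀ *ᵥ v) := by
    rw [Matrix.mulVec_mulVec, ← Matrix.transpose_mul, hXinv, Matrix.transpose_one,
      Matrix.one_mulVec]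
  have h7 : en v ≤ ‖(X⁻¹)ᵀ‖ * en (Xᵀ *ᵥ v) := by
    conv_lhs => rw [hv]
    exact en_mulVec_le _ _
  have h8 : ‖(X⁻¹)ᵀ‖ ≤ 1 / c := by rw [en_norm_transpose]; exact hninv
  have h9 : en v ≤ (1 / c) * en (Xᵀ *ᵥ v) :=
    h7.trans (by apply mul_le_mul_of_nonneg_right h8 (en_nonneg _))
  have h10 := mul_le_mul_of_nonneg_left h9 hc
  have hcne : c ≠ 0 := ne_of_gt hcpos
  calc c * en v ≤ c * (1 / c * en (Xᵀ *ᵥ v)) := h10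
    _ = en (Xᵀ *ᵥ v) := by field_simp

/-! ### Selection matrices -/

variable {ρ k : ℕ}

def esum (hkρ : k ≤ ρ) : Fin k ⊕ Fin (ρ - k) ≃ Fin ρ :=
  finSumFinEquiv.trans (finCongr (Nat.add_sub_cancel' hkρ))

def Esum (hkρ : k ≤ ρ) : Matrix (Fin ρ) (Fin k ⊕ Fin (ρ - k)) ℝ :=
  (1 : Matrix (Fin ρ) (Fin ρ) ℝ).submatrix id (esum hkρ)

def E₁ (hkρ : k ≤ ρ) : Matrix (Fin ρ) (Fin k) ℝ := (Esum hkρ).submatrix id Sum.inl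
def E₂ (hkρ : k ≤ ρ) : Matrix (Fin ρ) (Fin (ρ - k)) ℝ := (Esum hkρ).submatrix id Sum.inr

variable (hkρ : k ≤ ρ)

lemma Esum_mul_transpose : Esum hkρ * (Esum hkρ)ᵀ = 1 := by
  rw [Esum, Matrix.transpose_submatrix, Matrix.transpose_one]
  rw [Matrix.submatrix_mul_equiv (1 : Matrix (Fin ρ) (Fin ρ) ℝ) 1 id (esum hkρ) id]
  simp

lemma transpose_mul_Esum : (Esum hkρ)ᵀ * Esum hkρ = 1 := by
  rw [Esum, Matrix.transpose_submatrix, Matrix.transpose_one]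
  ext x y
  simp [Matrix.mul_apply, Matrix.one_apply, (esum hkρ).injective.eq_iff]

lemma E_entry_mul (x y : Fin k ⊕ Fin (ρ - k)) :
    ∑ l : Fin ρ, Esum hkρ l x * Esum hkρ l y = if x = y then 1 else 0 := by
  have h := congrFun (congrFun (transpose_mul_Esum hkρ) x) y
  simpa [Matrix.mul_apply, Matrix.one_apply, Matrix.transpose_apply] using h

lemma hE11 : (E₁ hkρ)ᵀ * E₁ hkρ = 1 := by
  ext a b
  have := E_entry_mul hkρ (Sum.inl a) (Sum.inl b)
  simpa [E₁, Matrix.mul_apply, Matrix.one_apply] using this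

lemma hE22 : (E₂ hkρ)ᵀ * E₂ hkρ = 1 := by
  ext a b
  have := E_entry_mul hkρ (Sum.inr a) (Sum.inr b)
  simpa [E₂, Matrix.mul_apply, Matrix.one_apply] using this

lemma hE12 : (E₁ hkρ)ᵀ * E₂ hkρ = 0 := by
  ext a b
  have := E_entry_mul hkρ (Sum.inl a) (Sum.inr b)
  simpa [E₁, E₂, Matrix.mul_apply] using this

lemma hE21 : (E₂ hkρ)ᵀ * E₁ hkρ = 0 := by
  ext a b
  have := E_entry_mul hkρ (Sum.inr a) (Sum.inl b)
  simpa [E₁, E₂, Matrix.mul_apply] using this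

lemma hEE : E₁ hkρ * (E₁ hkρ)ᵀ + E₂ hkρ * (E₂ hkρ)ᵀ = 1 := by
  ext i j
  have h := congrFun (congrFun (Esum_mul_transpose hkρ) i) j
  rw [Matrix.mul_apply, Fintype.sum_sum_type] at h
  simpa [E₁, E₂, Matrix.mul_apply, Matrix.add_apply] using h

lemma mul_sel {m' a : ℕ} (U : Matrix (Fin m') (Fin ρ) ℝ) (f : Fin a → Fin ρ) :
    U * (1 : Matrix (Fin ρ) (Fin ρ) ℝ).submatrix id f = U.submatrix id f := by
  ext i j
  rw [Matrix.mul_apply]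
  simp [Matrix.one_apply]

lemma mul_E₁ {m' : ℕ} (U : Matrix (Fin m') (Fin ρ) ℝ) :
    U * E₁ hkρ = U.submatrix id (Fin.castLE hkρ) := by
  have h : E₁ hkρ = (1 : Matrix (Fin ρ) (Fin ρ) ℝ).submatrix id (Fin.castLE hkρ) := by
    have hfun : (⇑(esum hkρ) ∘ Sum.inl) = Fin.castLE hkρ := by
      funext a
      simp [esum, finSumFinEquiv, Fin.ext_iff]
    rw [E₁, Esum, Matrix.submatrix_submatrix, hfun]
    rfl
  rw [h, mul_sel]

lemma mul_E₂ {m' : ℕ} (U : Matrix (Fin m') (Fin ρ) ℝ) :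
    U * E₂ hkρ =
      U.submatrix id (fun j : Fin (ρ - k) => (⟨k + j, by have := j.isLt; omega⟩ : Fin ρ)) := by
  have h : E₂ hkρ = (1 : Matrix (Fin ρ) (Fin ρ) ℝ).submatrix id
      (fun j : Fin (ρ - k) => (⟨k + j, by have := j.isLt; omega⟩ : Fin ρ)) := by
    have hfun : (⇑(esum hkρ) ∘ Sum.inr) =
        (fun j : Fin (ρ - k) => (⟨k + j, by have := j.isLt; omega⟩ : Fin ρ)) := by
      funext a
      simp [esum, finSumFinEquiv, Fin.ext_iff]
    rw [E₂, Esum, Matrix.submatrix_submatrix, hfun]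
    rfl
  rw [h, mul_sel]

end Stmt7Aux

/-- if `Q` has `k` orthonormal columns lying in the column space of `A`, then
`‖U_k U_kᵀ − Q Qᵀ‖₂ = ‖U_{ρ−k}ᵀ Q‖₂`. -/
theorem stmt_7 (m n ρ k : ℕ) (hkρ : k ≤ ρ)
    (A : Matrix (Fin m) (Fin n) ℝ)
    (U : Matrix (Fin m) (Fin ρ) ℝ) (V : Matrix (Fin n) (Fin ρ) ℝ) (σ : Fin ρ → ℝ)
    (hU : Uᵀ * U = 1) (hV : Vᵀ * V = 1)
    (hσpos : ∀ i, 0 < σ i) (hσmono : ∀ i j : Fin ρ, i ≤ j → σ j ≤ σ i)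
    (hA : A = U * Matrix.diagonal σ * Vᵀ) (hrank : A.rank = ρ)
    (Q : Matrix (Fin m) (Fin k) ℝ) (hQ : Qᵀ * Q = 1)
    (hQcol : ∀ j : Fin k, Qᵀ j ∈ colSpace A) :
    ‖U.submatrix id (Fin.castLE hkρ) * (U.submatrix id (Fin.castLE hkρ))ᵀ - Q * Qᵀ‖ =
      ‖(U.submatrix id
          (fun j : Fin (ρ - k) => (⟨k + j, by have := j.isLt; omega⟩ : Fin ρ)))ᵀ * Q‖ := by
  classical
  open Stmt7Aux in
  obtain ⟨E1, hE1def⟩ : ∃ E, E = E₁ (ρ := ρ) (k := k) hkρ := ⟨_, rfl⟩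
  obtain ⟨E2, hE2def⟩ : ∃ E, E = E₂ (ρ := ρ) (k := k) hkρ := ⟨_, rfl⟩
  have e11 : E1ᵀ * E1 = 1 := by rw [hE1def]; exact hE11 hkρ
  have e22 : E2ᵀ * E2 = 1 := by rw [hE2def]; exact hE22 hkρ
  have e12 : E1ᵀ * E2 = 0 := by rw [hE1def, hE2def]; exact hE12 hkρ
  have e21 : E2ᵀ * E1 = 0 := by rw [hE1def, hE2def]; exact hE21 hkρ
  have eEE : E1 * E1ᵀ + E2 * E2ᵀ = 1 := by rw [hE1def, hE2def]; exact hEE hkρ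
  -- contraction helpers
  have c11 : ∀ {s : ℕ} (B : Matrix (Fin k) (Fin s) ℝ), E1ᵀ * (E1 * B) = B := by
    intro s B; rw [← Matrix.mul_assoc, e11, Matrix.one_mul]
  have c22 : ∀ {s : ℕ} (B : Matrix (Fin (ρ - k)) (Fin s) ℝ), E2ᵀ * (E2 * B) = B := by
    intro s B; rw [← Matrix.mul_assoc, e22, Matrix.one_mul]
  have c12 : ∀ {s : ℕ} (B : Matrix (Fin (ρ - k)) (Fin s) ℝ), E1ᵀ * (E2 * B) = 0 := by
    intro s B; rw [← Matrix.mul_assoc, e12, Matrix.zero_mul]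
  have c21 : ∀ {s : ℕ} (B : Matrix (Fin k) (Fin s) ℝ), E2ᵀ * (E1 * B) = 0 := by
    intro s B; rw [← Matrix.mul_assoc, e21, Matrix.zero_mul]
  have cUU : ∀ {s : ℕ} (B : Matrix (Fin ρ) (Fin s) ℝ), Uᵀ * (U * B) = B := by
    intro s B; rw [← Matrix.mul_assoc, hU, Matrix.one_mul]
  -- Q is in the range of U
  have hP : ∀ x ∈ colSpace A, U *ᵥ (Uᵀ *ᵥ x) = x := by
    intro x hx
    induction hx using Submodule.span_induction with
    | mem x hxmem =>
      obtain ⟨c, rfl⟩ := hxmem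
      have hcol : Aᵀ c = U *ᵥ ((Matrix.diagonal σ * Vᵀ)ᵀ c) := by
        funext i
        simp [hA, Matrix.mul_apply, Matrix.mulVec, dotProduct, Matrix.transpose_apply,
          Matrix.mul_assoc]
      rw [hcol, Matrix.mulVec_mulVec, Matrix.mulVec_mulVec, Matrix.mul_assoc, hU,
        Matrix.mul_one]
    | zero => simp
    | add a b _ _ iha ihb => rw [Matrix.mulVec_add, Matrix.mulVec_add, iha, ihb]
    | smul r a _ iha => rw [Matrix.mulVec_smul, Matrix.mulVec_smul, iha]
  obtain ⟨W, hWdef⟩ : ∃ B, B = Uᵀ * Q := ⟨_, rfl⟩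
  have hQU : Q = U * W := by
    ext i j
    have h2 := congrFun (hP (Qᵀ j) (hQcol j)) i
    simp only [Matrix.mulVec, dotProduct, Matrix.transpose_apply] at h2
    rw [hWdef]
    simp only [Matrix.mul_apply]
    exact h2.symm
  have hWW : Wᵀ * W = 1 := by
    have h : Wᵀ * W = Qᵀ * (U * W) := by
      rw [hWdef, Matrix.transpose_mul, Matrix.transpose_transpose, Matrix.mul_assoc]
    rw [h, ← hQU, hQ]
  have cW : ∀ {s : ℕ} (B : Matrix (Fin k) (Fin s) ℝ), Wᵀ * (W * B) = B := by
    intro s B; rw [← Matrix.mul_assoc, hWW, Matrix.one_mul]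
  obtain ⟨X, hXdef⟩ : ∃ B, B = E1ᵀ * W := ⟨_, rfl⟩
  obtain ⟨Y, hYdef⟩ : ∃ B, B = E2ᵀ * W := ⟨_, rfl⟩
  have hW : W = E1 * X + E2 * Y := by
    have h1 : (E1 * E1ᵀ + E2 * E2ᵀ) * W = W := by rw [eEE, Matrix.one_mul]
    calc W = (E1 * E1ᵀ + E2 * E2ᵀ) * W := h1.symm
      _ = E1 * X + E2 * Y := by
          rw [Matrix.add_mul, Matrix.mul_assoc, Matrix.mul_assoc, ← hXdef, ← hYdef]
  -- identify RHS with Y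
  have hrhs : (U.submatrix id
      (fun j : Fin (ρ - k) => (⟨k + j, by have := j.isLt; omega⟩ : Fin ρ)))ᵀ * Q = Y := by
    rw [← mul_E₂ hkρ U, ← hE2def, Matrix.transpose_mul, hQU, Matrix.mul_assoc, cUU, hYdef]
  -- identify LHS with U * (M * Uᵀ)
  obtain ⟨M, hMdef⟩ : ∃ B, B = E1 * E1ᵀ - W * Wᵀ := ⟨_, rfl⟩
  have hlhs : U.submatrix id (Fin.castLE hkρ) * (U.submatrix id (Fin.castLE hkρ))ᵀ - Q * Qᵀ
      = U * (M * Uᵀ) := by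
    rw [← mul_E₁ hkρ U, ← hE1def, hQU, hMdef]
    rw [Matrix.transpose_mul, Matrix.transpose_mul]
    simp only [Matrix.sub_mul, Matrix.mul_sub, Matrix.mul_assoc]
  have hnormM : ‖U * (M * Uᵀ)‖ = ‖M‖ := by
    rw [norm_mul_left_iso U hU, norm_mul_right_iso M U hU]
  have hMsym : Mᵀ = M := by
    rw [hMdef]
    simp [Matrix.transpose_sub, Matrix.transpose_mul]
  -- the key block-diagonal form of M * M
  have hXW : ∀ {s : ℕ} (B : Matrix (Fin k) (Fin s) ℝ), E1ᵀ * (W * B) = X * B := by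
    intro s B; rw [hXdef, ← Matrix.mul_assoc]
  have hWE1 : ∀ {s : ℕ} (B : Matrix (Fin k) (Fin s) ℝ), Wᵀ * (E1 * B) = Xᵀ * B := by
    intro s B
    rw [hXdef, Matrix.transpose_mul, Matrix.transpose_transpose, ← Matrix.mul_assoc]
  have hM2 : M * M = E1 * ((1 - X * Xᵀ) * E1ᵀ) + E2 * ((Y * Yᵀ) * E2ᵀ) := by
    have step1 : M * M = E1 * E1ᵀ - E1 * (X * Wᵀ) - (W * (Xᵀ * E1ᵀ) - W * Wᵀ) := by
      rw [hMdef]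
      simp only [Matrix.sub_mul, Matrix.mul_sub, Matrix.mul_assoc, c11, cW, hXW, hWE1]
      abel
    rw [step1, hW]
    simp only [Matrix.transpose_add, Matrix.transpose_mul, Matrix.transpose_transpose,
      Matrix.add_mul, Matrix.mul_add, Matrix.mul_sub, Matrix.sub_mul, Matrix.one_mul,
      Matrix.mul_one, Matrix.mul_assoc]
    abel
  -- X ᵀX + YᵀY = 1
  have hXY : Xᵀ * X + Yᵀ * Y = 1 := by
    have h : Xᵀ * X + Yᵀ * Y = Wᵀ * ((E1 * E1ᵀ + E2 * E2ᵀ) * W) := by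
      rw [hXdef, hYdef]
      simp only [Matrix.transpose_mul, Matrix.transpose_transpose, Matrix.add_mul,
        Matrix.mul_add, Matrix.mul_assoc]
    rw [h, eEE, Matrix.one_mul, hWW]
  have hYnn : (0:ℝ) ≤ ‖Y‖ := norm_nonneg _
  have hMnn : (0:ℝ) ≤ ‖M‖ := norm_nonneg _
  -- ‖Y‖ ≤ ‖M‖
  have hYM : ‖Y‖ ≤ ‖M‖ := by
    have t1 : (E1 * ((1 - X * Xᵀ) * E1ᵀ)) * E2 = 0 := by
      rw [Matrix.mul_assoc, Matrix.mul_assoc, e12, Matrix.mul_zero, Matrix.mul_zero]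
    have t2 : (E2 * ((Y * Yᵀ) * E2ᵀ)) * E2 = E2 * (Y * Yᵀ) := by
      rw [Matrix.mul_assoc, Matrix.mul_assoc, e22, Matrix.mul_one]
    have hyy : Y * Yᵀ = E2ᵀ * ((M * M) * E2) := by
      rw [hM2, Matrix.add_mul, t1, t2, zero_add, c22]
    have h1 : ‖Y‖ ^ 2 = ‖Y * Yᵀ‖ := by
      have h := norm_tmul Yᵀ
      rw [Matrix.transpose_transpose, en_norm_transpose] at h
      exact h.symm
    have hE2n : ‖E2‖ ≤ 1 := norm_sel_le E2 e22
    have hE2tn : ‖E2ᵀ‖ ≤ 1 := by rw [en_norm_transpose]; exact hE2n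
    have n2 := norm_nonneg (M * M)
    have n3 := norm_nonneg (E2ᵀ)
    have hsq : ‖Y‖ ^ 2 ≤ ‖M‖ ^ 2 := by
      rw [h1, hyy]
      calc ‖E2ᵀ * ((M * M) * E2)‖ ≤ ‖E2ᵀ‖ * ‖(M * M) * E2‖ :=
            Matrix.l2_opNorm_mul E2ᵀ ((M * M) * E2)
        _ ≤ ‖E2ᵀ‖ * (‖M * M‖ * ‖E2‖) :=
            mul_le_mul_of_nonneg_left (Matrix.l2_opNorm_mul (M * M) E2) n3
        _ ≤ 1 * (‖M * M‖ * 1) := by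
            have hmm : ‖M * M‖ * ‖E2‖ ≤ ‖M * M‖ * 1 :=
              mul_le_mul_of_nonneg_left hE2n n2
            have := mul_le_mul hE2tn hmm (by positivity) (by norm_num)
            linarith
        _ = ‖M * M‖ := by ring
        _ ≤ ‖M‖ * ‖M‖ := Matrix.l2_opNorm_mul M M
        _ = ‖M‖ ^ 2 := by ring
    exact (pow_le_pow_iff_left₀ hYnn hMnn two_ne_zero).mp hsq
  -- ‖M‖ ≤ ‖Y‖
  have hMY : ‖M‖ ≤ ‖Y‖ := by
    apply mat_norm_le _ hYnn
    intro v
    obtain ⟨v1, hv1⟩ : ∃ u, u = E1ᵀ *ᵥ v := ⟨_, rfl⟩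
    obtain ⟨v2, hv2⟩ : ∃ u, u = E2ᵀ *ᵥ v := ⟨_, rfl⟩
    have dps2 : ∀ {p q : ℕ} (A : Matrix (Fin p) (Fin q) ℝ) (u : Fin q → ℝ) (w : Fin p → ℝ),
        w ⬝ᵥ (A *ᵥ u) = (Aᵀ *ᵥ w) ⬝ᵥ u := by
      intro p q A u w
      rw [dotProduct_comm, dp_shift, dotProduct_comm]
    have key : en (M *ᵥ v) ^ 2 ≤ ‖Y‖ ^ 2 * en v ^ 2 := by
      have h0 : en (M *ᵥ v) ^ 2 = v ⬝ᵥ ((M * M) *ᵥ v) := by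
        rw [en_sq, dp_shift, hMsym, Matrix.mulVec_mulVec]
      have hA1 : v ⬝ᵥ ((E1 * ((1 - X * Xᵀ) * E1ᵀ)) *ᵥ v)
          = v1 ⬝ᵥ v1 - (Xᵀ *ᵥ v1) ⬝ᵥ (Xᵀ *ᵥ v1) := by
        rw [← Matrix.mulVec_mulVec, ← Matrix.mulVec_mulVec, dps2, ← hv1,
          Matrix.sub_mulVec, Matrix.one_mulVec, dotProduct_sub, ← Matrix.mulVec_mulVec,
          dps2]
      have hA2 : v ⬝ᵥ ((E2 * ((Y * Yᵀ) * E2ᵀ)) *ᵥ v)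
          = (Yᵀ *ᵥ v2) ⬝ᵥ (Yᵀ *ᵥ v2) := by
        rw [← Matrix.mulVec_mulVec, ← Matrix.mulVec_mulVec, dps2, ← hv2,
          ← Matrix.mulVec_mulVec, dps2]
      have e1 : en (M *ᵥ v) ^ 2
          = v1 ⬝ᵥ v1 - (Xᵀ *ᵥ v1) ⬝ᵥ (Xᵀ *ᵥ v1) + (Yᵀ *ᵥ v2) ⬝ᵥ (Yᵀ *ᵥ v2) := by
        rw [h0, hM2, Matrix.add_mulVec, dotProduct_add, hA1, hA2]
      have hsplit : v1 ⬝ᵥ v1 + v2 ⬝ᵥ v2 = en v ^ 2 := by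
        have g1 : v ⬝ᵥ (E1 *ᵥ (E1ᵀ *ᵥ v)) = v1 ⬝ᵥ v1 := by rw [dps2, ← hv1]
        have g2 : v ⬝ᵥ (E2 *ᵥ (E2ᵀ *ᵥ v)) = v2 ⬝ᵥ v2 := by rw [dps2, ← hv2]
        have h1 : v ⬝ᵥ ((E1 * E1ᵀ + E2 * E2ᵀ) *ᵥ v) = v ⬝ᵥ v := by
          rw [eEE, Matrix.one_mulVec]
        rw [Matrix.add_mulVec, dotProduct_add, ← Matrix.mulVec_mulVec,
          ← Matrix.mulVec_mulVec, g1, g2] at h1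
        rw [en_sq, ← h1]
      have hYpart : (Yᵀ *ᵥ v2) ⬝ᵥ (Yᵀ *ᵥ v2) ≤ ‖Y‖ ^ 2 * (v2 ⬝ᵥ v2) := by
        rw [← en_sq, ← en_sq]
        have h := en_mulVec_le Yᵀ v2
        rw [en_norm_transpose] at h
        exact mul_sq_bound (en_nonneg _) h
      have hXpart : v1 ⬝ᵥ v1 - (Xᵀ *ᵥ v1) ⬝ᵥ (Xᵀ *ᵥ v1) ≤ ‖Y‖ ^ 2 * (v1 ⬝ᵥ v1) := by
        rw [← en_sq, ← en_sq]
        by_cases hY1 : 1 ≤ ‖Y‖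
        · exact big_bound hY1 (en_nonneg _) (en_nonneg _)
        · push_neg at hY1
          obtain ⟨c, hcdef⟩ : ∃ c, c = Real.sqrt (1 - ‖Y‖ ^ 2) := ⟨_, rfl⟩
          have hc : 0 ≤ c := hcdef ▸ Real.sqrt_nonneg _
          have hc2 : c ^ 2 = 1 - ‖Y‖ ^ 2 := by
            rw [hcdef, Real.sq_sqrt (one_sub_sq_nonneg hYnn hY1)]
          have hXlow : ∀ u, c * en u ≤ en (X *ᵥ u) := by
            intro u
            have hXXu : (X *ᵥ u) ⬝ᵥ (X *ᵥ u) = u ⬝ᵥ u - (Y *ᵥ u) ⬝ᵥ (Y *ᵥ u) := by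
              rw [dp_shift, Matrix.mulVec_mulVec]
              have hXX : Xᵀ * X = 1 - Yᵀ * Y := eq_sub_of_add_eq hXY
              rw [hXX, Matrix.sub_mulVec, Matrix.one_mulVec, dotProduct_sub,
                ← Matrix.mulVec_mulVec, dps2, Matrix.transpose_transpose]
            have hsq : en (X *ᵥ u) ^ 2 = en u ^ 2 - en (Y *ᵥ u) ^ 2 := by
              rw [en_sq, en_sq, en_sq, hXXu]
            have hylow := en_mulVec_le Y u
            exact slow_bound (en_nonneg _) (en_nonneg _) (en_nonneg _) hYnn hc hsq hylow hc2
          have hlow := smin_transpose X hc hXlow v1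
          exact trans_bound (en_nonneg _) (en_nonneg _) hc hYnn hlow hc2
      have hdist : ‖Y‖ ^ 2 * (v1 ⬝ᵥ v1) + ‖Y‖ ^ 2 * (v2 ⬝ᵥ v2) = ‖Y‖ ^ 2 * en v ^ 2 := by
        rw [← hsplit]; ring
      linarith [e1, hYpart, hXpart, hdist]
    exact root_le (en_nonneg _) hYnn (en_nonneg _) key
  rw [hlhs, hrhs, hnormM]
  exact le_antisymm hMY hYM

end
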